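/- Let F, G : {λ ∈ ℂ : Re λ ≥ 0} → ℂ be functions analytic near 0 with F(0) = 0, F'(0) < 0 real, and G(0) > 0 real, and with F, G real-valued on the nonnegative real axis. Then for all sufficiently large s > 0 the equation s F(λ) + G(λ) = 0 has a real solution λ(s) = −G(0)/(s F'(0)) + O(s⁻²) > 0. -/

import Mathlib

open Set

/-- Factorization of an analytic function: `f z = f 0 + z * g z` with `g` analytic at 0
and `g 0 = deriv f 0`. -/
lemma factor_analytic (f : ℂ → ℂ) (hf : AnalyticAt ℂ f 0) :
    ∃ g : ℂ → ℂ, AnalyticAt ℂ g 0 ∧ g 0 = deriv f 0 ∧ ∀ z, f z = f 0 + z * g z := by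
  refine ⟨dslope f 0, ?_, dslope_same f 0, ?_⟩
  · obtain ⟨p, hp⟩ := hf
    exact ⟨p.fslope, hp.has_fpower_series_dslope_fslope⟩
  · intro z
    rcases eq_or_ne z 0 with rfl | hz
    · simp
    · rw [dslope_of_ne f hz, slope_def_field]
      field_simp
      ring

theorem stmt_13 (F G : ℂ → ℂ)
    (hF : AnalyticAt ℂ F 0) (hG : AnalyticAt ℂ G 0)
    (hF0 : F 0 = 0)
    (hF' : (deriv F 0).im = 0) (hF'neg : (deriv F 0).re < 0)
    (hG0im : (G 0).im = 0) (hG0pos : 0 < (G 0).re)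
    (hFreal : ∀ x : ℝ, 0 ≤ x → (F x).im = 0)
    (hGreal : ∀ x : ℝ, 0 ≤ x → (G x).im = 0) :
    ∃ C > 0, ∃ s₀ > 0, ∀ s : ℝ, s₀ < s →
      ∃ l : ℝ, 0 < l ∧ (s : ℂ) * F l + G l = 0 ∧
        |l - (-(G 0).re / (s * (deriv F 0).re))| ≤ C / s ^ 2 := by
  obtain ⟨g, hg, hg0, hgF⟩ := factor_analytic F hF
  obtain ⟨k, hk, hk0, hkg⟩ := factor_analytic g hg
  obtain ⟨q, hq, hq0, hqG⟩ := factor_analytic G hG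
  -- key identity: F z = deriv F 0 * z + z^2 * k z
  have hFid : ∀ z : ℂ, F z = deriv F 0 * z + z ^ 2 * k z := by
    intro z
    rw [hgF z, hkg z, hF0, hg0]
    ring
  set a : ℝ := (deriv F 0).re with ha_def
  set g0 : ℝ := (G 0).re with hg0_def
  have ha : a < 0 := hF'neg
  have ha0 : a ≠ 0 := ne_of_lt ha
  set c : ℝ := g0 / (-a) with hc_def
  have hc : 0 < c := div_pos hG0pos (by linarith)
  -- bounds on k and q near 0, and continuity of F, G near 0
  have hkc : ContinuousAt k 0 := hk.continuousAt
  have hqc : ContinuousAt q 0 := hq.continuousAt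
  set M : ℝ := ‖k 0‖ + 1 with hM_def
  set K : ℝ := ‖q 0‖ + 1 with hK_def
  have hMpos : 0 < M := by positivity
  have hKpos : 0 < K := by positivity
  have hev : ∀ᶠ z : ℂ in nhds 0, ‖k z‖ ≤ M ∧ ‖q z‖ ≤ K ∧ ContinuousAt F z ∧
      ContinuousAt G z := by
    have h1 : ∀ᶠ z : ℂ in nhds 0, ‖k z‖ ≤ M := by
      have := hkc.eventually (Metric.ball_mem_nhds (k 0) one_pos)
      filter_upwards [this] with z hz
      have : ‖k z - k 0‖ < 1 := by simpa [dist_eq_norm] using hz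
      calc ‖k z‖ = ‖k 0 + (k z - k 0)‖ := by ring_nf
        _ ≤ ‖k 0‖ + ‖k z - k 0‖ := norm_add_le _ _
        _ ≤ M := by rw [hM_def]; linarith
    have h2 : ∀ᶠ z : ℂ in nhds 0, ‖q z‖ ≤ K := by
      have := hqc.eventually (Metric.ball_mem_nhds (q 0) one_pos)
      filter_upwards [this] with z hz
      have : ‖q z - q 0‖ < 1 := by simpa [dist_eq_norm] using hz
      calc ‖q z‖ = ‖q 0 + (q z - q 0)‖ := by ring_nf
        _ ≤ ‖q 0‖ + ‖q z - q 0‖ := norm_add_le _ _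
        _ ≤ K := by rw [hK_def]; linarith
    have h3 : ∀ᶠ z : ℂ in nhds 0, ContinuousAt F z :=
      hF.eventually_analyticAt.mono fun z hz => hz.continuousAt
    have h4 : ∀ᶠ z : ℂ in nhds 0, ContinuousAt G z :=
      hG.eventually_analyticAt.mono fun z hz => hz.continuousAt
    filter_upwards [h1, h2, h3, h4] with z a b c d using ⟨a, b, c, d⟩
  obtain ⟨δ, hδpos, hδ⟩ := Metric.eventually_nhds_iff.mp hev
  -- the constant C and threshold s₀
  set C : ℝ := (4 * M * c ^ 2 + 2 * K * c + 1) / (-a) with hC_def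
  have hCpos : 0 < C := by
    apply div_pos _ (by linarith)
    positivity
  refine ⟨C, hCpos, max (C / c) (2 * c / δ) + 1, by positivity, fun s hs => ?_⟩
  have hs1 : 1 < s := by
    have : (0:ℝ) ≤ max (C / c) (2 * c / δ) :=
      le_trans (le_of_lt (div_pos hCpos hc)) (le_max_left _ _)
    linarith
  have hspos : 0 < s := by linarith
  have hsC : C < c * s := by
    have h1 : C / c < s := by
      have := le_max_left (C / c) (2 * c / δ); linarith
    calc C = (C / c) * c := by field_simp
      _ < s * c := by exact mul_lt_mul_of_pos_right h1 hc
      _ = c * s := by ring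
  have hsδ : 2 * c / s < δ := by
    have h1 : 2 * c / δ < s := by
      have := le_max_right (C / c) (2 * c / δ); linarith
    rw [div_lt_iff₀ hspos]
    calc 2 * c = (2 * c / δ) * δ := by field_simp
      _ < s * δ := mul_lt_mul_of_pos_right h1 hδpos
      _ = δ * s := by ring
  -- endpoints
  set xm : ℝ := c / s - C / s ^ 2 with hxm_def
  set xp : ℝ := c / s + C / s ^ 2 with hxp_def
  have hxm_pos : 0 < xm := by
    rw [hxm_def]
    have : C / s ^ 2 < c / s := by
      rw [div_lt_div_iff₀ (by positivity) hspos]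
      calc C * s < c * s * s := mul_lt_mul_of_pos_right hsC hspos
        _ = c * s ^ 2 := by ring
    linarith
  have hxp_le : xp ≤ 2 * c / s := by
    rw [hxp_def]
    have : C / s ^ 2 ≤ c / s := by
      rw [div_le_div_iff₀ (by positivity) hspos]
      calc C * s ≤ c * s * s := le_of_lt (mul_lt_mul_of_pos_right hsC hspos)
        _ = c * s ^ 2 := by ring
    have h2 : 2 * c / s = c / s + c / s := by ring
    linarith
  have hle : xm ≤ xp := by
    have : 0 ≤ C / s ^ 2 := by positivity
    rw [hxm_def, hxp_def]; linarith
  -- real-part formulas and the estimate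
  have hFre : ∀ x : ℝ, (F x).re = a * x + (((x:ℂ)) ^ 2 * k x).re := by
    intro x
    rw [hFid x]
    simp [Complex.add_re, Complex.mul_re, Complex.ofReal_re, Complex.ofReal_im]
    exact Or.inl ha_def.symm
  have hGre : ∀ x : ℝ, (G x).re = g0 + (((x:ℂ)) * q x).re := by
    intro x
    rw [hqG x]
    simp [Complex.add_re, Complex.mul_re, Complex.ofReal_re, Complex.ofReal_im]
    exact hg0_def.symm
  have key : ∀ x : ℝ, 0 ≤ x → x ≤ 2 * c / s →
      |s * (F x).re + (G x).re - (s * a * x + g0)| ≤ (4 * M * c ^ 2 + 2 * K * c) / s := by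
    intro x hx0 hx2
    have hxδ : ‖(x:ℂ)‖ < δ := by
      rw [Complex.norm_real, Real.norm_eq_abs, abs_of_nonneg hx0]; linarith
    have hxδ' : dist (x:ℂ) 0 < δ := by simpa [dist_eq_norm] using hxδ
    obtain ⟨hkb, hqb, -, -⟩ := hδ hxδ'
    have hb1 : |(((x:ℂ)) ^ 2 * k x).re| ≤ M * x ^ 2 := by
      calc |(((x:ℂ)) ^ 2 * k x).re| ≤ ‖((x:ℂ)) ^ 2 * k x‖ := Complex.abs_re_le_norm _
        _ = ‖(x:ℂ)‖ ^ 2 * ‖k x‖ := by rw [norm_mul, norm_pow]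
        _ ≤ x ^ 2 * M := by
            apply mul_le_mul _ hkb (norm_nonneg _) (by positivity)
            rw [Complex.norm_real, Real.norm_eq_abs, abs_of_nonneg hx0]
        _ = M * x ^ 2 := by ring
    have hb2 : |(((x:ℂ)) * q x).re| ≤ K * x := by
      calc |(((x:ℂ)) * q x).re| ≤ ‖((x:ℂ)) * q x‖ := Complex.abs_re_le_norm _
        _ = ‖(x:ℂ)‖ * ‖q x‖ := norm_mul _ _
        _ ≤ x * K := by
            apply mul_le_mul _ hqb (norm_nonneg _) hx0
            rw [Complex.norm_real, Real.norm_eq_abs, abs_of_nonneg hx0]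
        _ = K * x := by ring
    rw [hFre x, hGre x]
    have hexp : s * (a * x + (((x:ℂ)) ^ 2 * k x).re) + (g0 + (((x:ℂ)) * q x).re)
        - (s * a * x + g0) = s * (((x:ℂ)) ^ 2 * k x).re + (((x:ℂ)) * q x).re := by ring
    rw [hexp]
    have hx2c : x ^ 2 ≤ (2 * c / s) ^ 2 := by
      apply sq_le_sq' _ hx2; linarith
    calc |s * (((x:ℂ)) ^ 2 * k x).re + (((x:ℂ)) * q x).re|
        ≤ |s * (((x:ℂ)) ^ 2 * k x).re| + |(((x:ℂ)) * q x).re| := abs_add_le _ _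
      _ = s * |(((x:ℂ)) ^ 2 * k x).re| + |(((x:ℂ)) * q x).re| := by
          rw [abs_mul, abs_of_pos hspos]
      _ ≤ s * (M * x ^ 2) + K * x := by
          have := mul_le_mul_of_nonneg_left hb1 (le_of_lt hspos); linarith
      _ ≤ s * (M * (2 * c / s) ^ 2) + K * (2 * c / s) := by
          have h1 : s * (M * x ^ 2) ≤ s * (M * (2 * c / s) ^ 2) := by
            apply mul_le_mul_of_nonneg_left _ (le_of_lt hspos)
            exact mul_le_mul_of_nonneg_left hx2c (le_of_lt hMpos)
          have h2 : K * x ≤ K * (2 * c / s) := mul_le_mul_of_nonneg_left hx2 (le_of_lt hKpos)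
          linarith
      _ = (4 * M * c ^ 2 + 2 * K * c) / s := by field_simp; ring
  -- values at the endpoints
  have hCa : (-a) * C = 4 * M * c ^ 2 + 2 * K * c + 1 := by
    rw [hC_def]; field_simp
  have hac : a * c = -g0 := by
    have h1 : (-a) * c = g0 := by
      rw [hc_def]; field_simp
    rw [show a * c = -((-a) * c) by ring, h1]
  have hlin_m : s * a * xm + g0 = ((-a) * C) / s := by
    have h1 : s * a * xm = a * c - a * C / s := by
      rw [hxm_def]; field_simp
    rw [h1, hac]; ring
  have hlin_p : s * a * xp + g0 = -(((-a) * C) / s) := by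
    have h1 : s * a * xp = a * c + a * C / s := by
      rw [hxp_def]; field_simp
    rw [h1, hac]; ring
  have hxm0 : (0:ℝ) ≤ xm := le_of_lt hxm_pos
  have hxm2 : xm ≤ 2 * c / s := le_trans hle hxp_le
  have hkey_m := key xm hxm0 hxm2
  have hkey_p := key xp (le_trans hxm0 hle) hxp_le
  set h : ℝ → ℝ := fun x => s * (F x).re + (G x).re with hh_def
  have hhm : 0 ≤ h xm := by
    have h1 := (abs_le.mp hkey_m).1
    have h2 : s * a * xm + g0 = (4 * M * c ^ 2 + 2 * K * c + 1) / s := by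
      rw [hlin_m, hCa]
    have h3 : (4 * M * c ^ 2 + 2 * K * c + 1) / s - (4 * M * c ^ 2 + 2 * K * c) / s
        = 1 / s := by field_simp; ring
    have h4 : (0:ℝ) < 1 / s := by positivity
    simp only [hh_def]
    linarith
  have hhp : h xp ≤ 0 := by
    have h1 := (abs_le.mp hkey_p).2
    have h2 : s * a * xp + g0 = -((4 * M * c ^ 2 + 2 * K * c + 1) / s) := by
      rw [hlin_p, hCa]
    have h3 : (4 * M * c ^ 2 + 2 * K * c) / s - (4 * M * c ^ 2 + 2 * K * c + 1) / s
        = -(1 / s) := by field_simp; ring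
    have h4 : (0:ℝ) < 1 / s := by positivity
    simp only [hh_def]
    linarith
  -- continuity on the interval
  have hcont : ContinuousOn h (Icc xm xp) := by
    intro x hx
    have hx0 : 0 ≤ x := le_trans hxm0 hx.1
    have hxδ : dist (x:ℂ) 0 < δ := by
      have hxlt : x < δ := lt_of_le_of_lt (le_trans hx.2 hxp_le) hsδ
      simp only [dist_eq_norm, sub_zero, Complex.norm_real, Real.norm_eq_abs, abs_of_nonneg hx0]
      exact hxlt
    obtain ⟨-, -, hFc, hGc⟩ := hδ hxδ
    have hcF : ContinuousAt (fun y : ℝ => (F y).re) x :=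
      (Complex.continuous_re.continuousAt).comp
        (hFc.comp Complex.continuous_ofReal.continuousAt)
    have hcG : ContinuousAt (fun y : ℝ => (G y).re) x :=
      (Complex.continuous_re.continuousAt).comp
        (hGc.comp Complex.continuous_ofReal.continuousAt)
    exact ((continuousAt_const.mul hcF).add hcG).continuousWithinAt
  -- IVT
  have hmem : (0:ℝ) ∈ Icc (h xp) (h xm) := ⟨hhp, hhm⟩
  obtain ⟨l, hl_mem, hl_eq⟩ := intermediate_value_Icc' hle hcont hmem
  refine ⟨l, lt_of_lt_of_le hxm_pos hl_mem.1, ?_, ?_⟩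
  · -- the complex equation
    have hl0 : (0:ℝ) ≤ l := le_trans hxm0 hl_mem.1
    apply Complex.ext
    · simpa [Complex.add_re, Complex.mul_re, Complex.ofReal_re, Complex.ofReal_im,
        hh_def] using hl_eq
    · simp [Complex.add_im, Complex.mul_im, Complex.ofReal_re, Complex.ofReal_im,
        hFreal l hl0, hGreal l hl0]
  · -- the bound
    have htgt : -(G 0).re / (s * (deriv F 0).re) = c / s := by
      have h1 : s * a ≠ 0 := mul_ne_zero (ne_of_gt hspos) ha0
      have h2 : (-a) * s ≠ 0 := mul_ne_zero (neg_ne_zero.mpr ha0) (ne_of_gt hspos)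
      rw [← hg0_def, ← ha_def, hc_def, div_div, div_eq_div_iff h1 h2]
      ring
    rw [htgt, abs_le]
    constructor
    · have := hl_mem.1; rw [hxm_def] at this; linarith
    · have := hl_mem.2; rw [hxp_def] at this; linarith
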